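/- Let X be uniformly distributed on (0,1] and let t(x) = i for x ∈ [1/(i+1), 1/i), i ≥ 1, so that P(t(X) = i) = 1/(i(i+1)). Then the Shannon mutual information I_Sh(X, t(X)) equals the entropy Σ_{i=1}^∞ ln(i(i+1))/(i(i+1)) of the pushforward law, this series converges, and its sum is at most ln(2)/2 + 2; in contrast, the chi-squared mutual information I_{χ²}(X, t(X)) is infinite. -/

import Mathlib

open MeasureTheory ENNReal

set_option linter.unreachableTactic false
set_option linter.unusedTactic false
set_option linter.deprecated false

private lemma keyineq (x : ℝ) (hx : 2 ≤ x) :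
    Real.log (x*(x+1)) / (x*(x+1)) ≤
      (2*Real.log x + (4 - 2*Real.log 2))/x - (2*Real.log (x+1) + (4 - 2*Real.log 2))/(x+1) := by
  have hx0 : (0:ℝ) < x := by linarith
  have hx1 : (0:ℝ) < x + 1 := by linarith
  have hlm : Real.log (x*(x+1)) = Real.log x + Real.log (x+1) :=
    Real.log_mul hx0.ne' hx1.ne'
  have h1 : Real.log (x+1) - Real.log x ≤ 1/x := by
    have ha : Real.log ((x+1)/x) ≤ (x+1)/x - 1 :=
      Real.log_le_sub_one_of_pos (by positivity)
    have hb : (x+1)/x - 1 = 1/x := by field_simp; ring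
    rw [Real.log_div hx1.ne' hx0.ne'] at ha
    linarith
  have h2 : Real.log 2 ≤ 3/4 := by
    have := Real.log_two_lt_d9
    linarith
  rw [hlm, div_sub_div _ _ hx0.ne' hx1.ne', div_le_div_iff₀ (by positivity) (by positivity)]
  have h3 : (2*x+1) * (Real.log (x+1) - Real.log x) ≤ (2*x+1) * (1/x) := by
    apply mul_le_mul_of_nonneg_left h1
    linarith
  have h4 : (2*x+1) * (1/x) = 2 + 1/x := by field_simp
  have h5 : 1/x ≤ 1/2 := by
    rw [div_le_div_iff₀ hx0 (by norm_num)]; linarith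
  nlinarith [mul_pos hx0 hx1, sq_nonneg x]

/-- the atom lemma -/
private lemma atoms (t : ℝ → ℕ) (ht : Measurable t)
    (hti : ∀ i : ℕ, 1 ≤ i → ∀ x ∈ Set.Ico (((i : ℝ) + 1)⁻¹) ((i : ℝ)⁻¹), t x = i) :
    ∀ i : ℕ, 1 ≤ i →
        ((volume.restrict (Set.Ioc (0 : ℝ) 1)).map t) {i} =
          ENNReal.ofReal (1 / (i * (i + 1))) := by
  intro i hi
  have hipos : (0:ℝ) < i := by exact_mod_cast hi
  rw [Measure.map_apply ht (measurableSet_singleton i),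
    Measure.restrict_apply (ht (measurableSet_singleton i))]
  have hsub : Set.Ico (((i:ℝ)+1)⁻¹) ((i:ℝ)⁻¹) ⊆ t ⁻¹' {i} ∩ Set.Ioc 0 1 := by
    intro x hx
    obtain ⟨hl, hu⟩ := hx
    refine ⟨hti i hi x ⟨hl, hu⟩, ?_, ?_⟩
    · have : (0:ℝ) < ((i:ℝ)+1)⁻¹ := by positivity
      linarith
    · have h1 : (i:ℝ)⁻¹ ≤ 1 := by
        rw [inv_le_one_iff₀]; right; exact_mod_cast hi
      linarith
  have hsup : t ⁻¹' {i} ∩ Set.Ioc 0 1 ⊆ Set.Ico (((i:ℝ)+1)⁻¹) ((i:ℝ)⁻¹) ∪ {1} := by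
    intro x hx
    obtain ⟨hxt, hx0, hx1⟩ := hx
    rcases eq_or_lt_of_le hx1 with h1 | h1
    · right; simp [h1]
    left
    have hxi : (1:ℝ) < x⁻¹ := by
      rw [lt_inv_comm₀ (by norm_num) hx0]; simpa using h1
    set m := ⌈x⁻¹⌉₊ with hm
    have hm2 : 2 ≤ m := by
      have : 1 < m := by
        rw [hm, Nat.lt_ceil]; exact_mod_cast hxi
      omega
    set j := m - 1 with hj
    have hj1 : 1 ≤ j := by omega
    have hmj : m = j + 1 := by omega
    have hjx : (j:ℝ) < x⁻¹ := by
      rw [← Nat.lt_ceil]; omega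
    have hxj : x⁻¹ ≤ (j:ℝ) + 1 := by
      have := Nat.le_ceil x⁻¹
      rw [← hm, hmj] at this
      push_cast at this
      linarith
    have hxIco : x ∈ Set.Ico (((j:ℝ)+1)⁻¹) ((j:ℝ)⁻¹) := by
      constructor
      · rw [inv_le_comm₀ (by positivity) hx0]
        exact hxj
      · exact (lt_inv_comm₀ hx0 (by exact_mod_cast hj1)).mpr hjx
    have : t x = j := hti j hj1 x hxIco
    have hij : j = i := by
      have : t x = i := hxt
      omega
    rwa [hij] at hxIco
  have hIco : volume (Set.Ico (((i:ℝ)+1)⁻¹) ((i:ℝ)⁻¹)) = ENNReal.ofReal (1 / (i * (i + 1))) := by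
    rw [Real.volume_Ico]
    congr 1
    field_simp
    ring
  refine le_antisymm ?_ ?_
  · calc volume (t ⁻¹' {i} ∩ Set.Ioc 0 1)
        ≤ volume (Set.Ico (((i:ℝ)+1)⁻¹) ((i:ℝ)⁻¹) ∪ {1}) := measure_mono hsup
      _ ≤ volume (Set.Ico (((i:ℝ)+1)⁻¹) ((i:ℝ)⁻¹)) + volume ({1} : Set ℝ) :=
          measure_union_le _ _
      _ = ENNReal.ofReal (1 / (i * (i + 1))) := by
          rw [Real.volume_singleton, add_zero, hIco]
  · rw [← hIco]; exact measure_mono hsub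

noncomputable def G : ℕ → ℝ := fun N =>
  if N = 0 then Real.log 2 / 2 + 2
  else (2*Real.log (N+1) + (4 - 2*Real.log 2))/(N+1)

lemma hlog2 : Real.log 2 ≤ 3/4 := by
  have := Real.log_two_lt_d9; linarith

lemma G_nonneg (N : ℕ) : 0 ≤ G N := by
  have hl2 : (0:ℝ) ≤ Real.log 2 := Real.log_nonneg (by norm_num)
  rcases Nat.eq_zero_or_pos N with h | h
  · simp [G, h]; linarith
  · rw [G, if_neg h.ne']
    have h1 : (0:ℝ) ≤ Real.log (N+1) := Real.log_nonneg (by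
      have : (0:ℝ) ≤ N := Nat.cast_nonneg N
      linarith)
    have := hlog2
    apply div_nonneg (by linarith) (by linarith)

lemma G_step (N : ℕ) :
    Real.log (((N:ℝ) + 1) * ((N:ℝ) + 2)) / (((N:ℝ) + 1) * ((N:ℝ) + 2)) ≤ G N - G (N+1) := by
  rcases Nat.eq_zero_or_pos N with h | h
  · subst h
    have : G 0 - G 1 = Real.log 2 / 2 := by
      simp only [G, if_pos rfl, if_neg one_ne_zero]
      norm_num
    rw [this]
    norm_num
  · obtain ⟨M, rfl⟩ := Nat.exists_eq_add_of_le h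
    have hk := keyineq ((M:ℝ)+2) (by
      have : (0:ℝ) ≤ M := Nat.cast_nonneg M
      linarith)
    rw [G, G, if_neg (by omega), if_neg (by omega)]
    push_cast
    ring_nf
    ring_nf at hk
    convert hk using 2 <;> ring_nf

lemma partial_sum_bound (N : ℕ) :
    ∑ i ∈ Finset.range N,
      Real.log (((i:ℝ) + 1) * ((i:ℝ) + 2)) / (((i:ℝ) + 1) * ((i:ℝ) + 2)) ≤
      (Real.log 2 / 2 + 2) - G N := by
  induction N with
  | zero => simp [G]
  | succ M ih =>
    rw [Finset.sum_range_succ]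
    have := G_step M
    linarith

lemma term_nonneg (i : ℕ) :
    0 ≤ Real.log (((i:ℝ) + 1) * ((i:ℝ) + 2)) / (((i:ℝ) + 1) * ((i:ℝ) + 2)) := by
  have h0 : (0:ℝ) ≤ i := Nat.cast_nonneg i
  apply div_nonneg
  · exact Real.log_nonneg (by nlinarith)
  · nlinarith

lemma summable_part : Summable (fun i : ℕ =>
    Real.log (((i:ℝ) + 1) * ((i:ℝ) + 2)) / (((i:ℝ) + 1) * ((i:ℝ) + 2))) := by
  apply summable_of_sum_range_le (c := Real.log 2 / 2 + 2) term_nonneg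
  intro n
  have := partial_sum_bound n
  have := G_nonneg n
  linarith

lemma tsum_part : (∑' i : ℕ,
    Real.log (((i:ℝ) + 1) * ((i:ℝ) + 2)) / (((i:ℝ) + 1) * ((i:ℝ) + 2))) ≤
    Real.log 2 / 2 + 2 := by
  apply Real.tsum_le_of_sum_range_le term_nonneg
  intro n
  have := partial_sum_bound n
  have := G_nonneg n
  linarith

/-- χ²-mutual information `I_{χ²}(X, t(X)) = ∫ 1/ν({t x}) dμ(x) - 1` of a deterministic
representation `t`, where `ν = t_* μ` (with the convention `1/0 = ∞`). -/
noncomputable def chiSqMIdet {X Z : Type*} [MeasurableSpace X] [MeasurableSpace Z]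
    (μX : Measure X) (t : X → Z) : ℝ≥0∞ :=
  (∫⁻ x, ((μX.map t) {t x})⁻¹ ∂μX) - 1

private lemma chisq_top (t : ℝ → ℕ) (ht : Measurable t)
    (hti : ∀ i : ℕ, 1 ≤ i → ∀ x ∈ Set.Ico (((i : ℝ) + 1)⁻¹) ((i : ℝ)⁻¹), t x = i)
    (hatom : ∀ i : ℕ, 1 ≤ i →
        ((volume.restrict (Set.Ioc (0 : ℝ) 1)).map t) {i} =
          ENNReal.ofReal (1 / (i * (i + 1)))) :
    chiSqMIdet (volume.restrict (Set.Ioc (0 : ℝ) 1)) t = ⊤ := by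
  set μ := volume.restrict (Set.Ioc (0 : ℝ) 1) with hμ
  set S : ℕ → Set ℝ := fun n => Set.Ico ((((n+1:ℕ) : ℝ) + 1)⁻¹) (((n+1:ℕ) : ℝ)⁻¹) with hS
  have hSm : ∀ n, MeasurableSet (S n) := fun n => measurableSet_Ico
  have hSd : Pairwise (Function.onFun Disjoint S) := by
    have aux : ∀ i j : ℕ, i < j → Disjoint (S i) (S j) := by
      intro i j hij
      rw [Set.disjoint_left]
      intro x hxi hxj
      have h1 : x < (((j+1:ℕ):ℝ))⁻¹ := hxj.2
      have h2 : ((((i+1:ℕ)):ℝ) + 1)⁻¹ ≤ x := hxi.1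
      have h3 : (((j+1:ℕ):ℝ))⁻¹ ≤ ((((i+1:ℕ)):ℝ) + 1)⁻¹ := by
        apply inv_anti₀ (by positivity)
        push_cast
        have : (i:ℝ) + 1 ≤ j := by exact_mod_cast hij
        linarith
      linarith
    intro i j hij
    rcases lt_or_gt_of_ne hij with h | h
    · exact aux i j h
    · exact (aux j i h).symm
  have hSsub : ∀ n, S n ⊆ Set.Ioc (0:ℝ) 1 := by
    intro n x hx
    have h0 : (0:ℝ) < ((((n+1:ℕ)):ℝ) + 1)⁻¹ := by positivity
    have h1 : (((n+1:ℕ):ℝ))⁻¹ ≤ 1 := by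
      rw [inv_le_one_iff₀]
      right
      push_cast; linarith [Nat.cast_nonneg (α := ℝ) n]
    exact ⟨lt_of_lt_of_le h0 hx.1, le_trans hx.2.le h1⟩
  have hμS : ∀ n, μ (S n) = ENNReal.ofReal (1 / ((n+1:ℕ) * ((n+1:ℕ) + 1))) := by
    intro n
    rw [hμ, Measure.restrict_apply (hSm n), Set.inter_eq_left.mpr (hSsub n), hS]
    simp only
    rw [Real.volume_Ico]
    congr 1
    have : (0:ℝ) < (n+1:ℕ) := by positivity
    field_simp
    ring
  have hpiece : ∀ n, ∫⁻ x in S n, ((μ.map t) {t x})⁻¹ ∂μ = 1 := by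
    intro n
    have hr : (0:ℝ) < 1 / ((n+1:ℕ) * ((n+1:ℕ) + 1)) := by positivity
    have hconst : ∫⁻ x in S n, ((μ.map t) {t x})⁻¹ ∂μ =
        ∫⁻ _ in S n, (ENNReal.ofReal (1 / ((n+1:ℕ) * ((n+1:ℕ) + 1))))⁻¹ ∂μ := by
      apply setLIntegral_congr_fun (hSm n)
      intro x hx
      simp only
      have htx : t x = n + 1 := hti (n+1) (by omega) x hx
      rw [htx, hatom (n+1) (by omega)]
    rw [hconst, setLIntegral_const, hμS n]
    exact ENNReal.inv_mul_cancel (by simp; positivity) ofReal_ne_top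
  have hmain : ∫⁻ x, ((μ.map t) {t x})⁻¹ ∂μ = ⊤ := by
    have hle : ∫⁻ x in ⋃ n, S n, ((μ.map t) {t x})⁻¹ ∂μ ≤
        ∫⁻ x, ((μ.map t) {t x})⁻¹ ∂μ :=
      lintegral_mono' Measure.restrict_le_self le_rfl
    rw [lintegral_iUnion hSm hSd] at hle
    simp only [hpiece] at hle
    rw [ENNReal.tsum_const_eq_top_of_ne_zero one_ne_zero] at hle
    exact top_le_iff.mp hle
  rw [chiSqMIdet, hmain]
  exact ENNReal.sub_eq_top_iff.mpr ⟨rfl, one_ne_top⟩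

/-- For `X` uniform on `(0,1]` and `t(x) = i` on `[1/(i+1), 1/i)`:
the pushforward law has atoms `P(t(X) = i) = 1/(i(i+1))`; the Shannon mutual
information `I_Sh(X, t(X))`, i.e. the entropy `Σ_{i≥1} ln(i(i+1))/(i(i+1))` of the
pushforward, is a convergent series with sum at most `ln(2)/2 + 2`; in contrast,
`I_{χ²}(X, t(X)) = ∞`. -/
theorem statement17 (t : ℝ → ℕ) (ht : Measurable t)
    (hti : ∀ i : ℕ, 1 ≤ i → ∀ x ∈ Set.Ico (((i : ℝ) + 1)⁻¹) ((i : ℝ)⁻¹), t x = i) :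
    (∀ i : ℕ, 1 ≤ i →
        ((volume.restrict (Set.Ioc (0 : ℝ) 1)).map t) {i} =
          ENNReal.ofReal (1 / (i * (i + 1)))) ∧
      Summable (fun i : ℕ =>
        Real.log ((i + 1) * (i + 2)) / ((i + 1) * (i + 2))) ∧
      (∑' i : ℕ, Real.log ((i + 1) * (i + 2)) / ((i + 1) * (i + 2))) ≤
        Real.log 2 / 2 + 2 ∧
      chiSqMIdet (volume.restrict (Set.Ioc (0 : ℝ) 1)) t = ⊤ := by
  have hatom := atoms t ht hti
  exact ⟨hatom, summable_part, tsum_part, chisq_top t ht hti hatom⟩
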